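/- arXiv:math/0409080 — 3 statements merged into one kernel-verified Lean document; each statement's English description precedes it below -/
import Mathlib

section
/- Let M and N be matroids with finite disjoint ground sets S and T. Then the collection I = { A ⊆ S ∪ T : A ∩ S is independent in M, and rk(M) − rk_M(A ∩ S) ≥ |A ∩ T| − rk_N(A ∩ T) } is the family of independent sets of a matroid on S ∪ T; i.e., there exists a matroid on ground set S ∪ T whose independent sets are exactly the members of I. -/
open Set Matroid

/-- The rank of a set `X` in a matroid `M`: the maximum cardinality of an
independent subset of `X`.  For `X = M.E` this is the rank of `M`. -/
noncomputable def mrk {α : Type*} (M : Matroid α) (X : Set α) : ℕ :=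
  sSup (Set.ncard '' {I | M.Indep I ∧ I ⊆ X})

section aux

variable {α : Type*} {M : Matroid α} {I J X Y : Set α}

lemma mrk_bddAbove (hE : M.E.Finite) (X : Set α) :
    BddAbove (Set.ncard '' {I | M.Indep I ∧ I ⊆ X}) := by
  refine ⟨M.E.ncard, ?_⟩
  rintro n ⟨J, ⟨hJ, _⟩, rfl⟩
  exact ncard_le_ncard hJ.subset_ground hE

lemma ncard_le_mrk (hE : M.E.Finite) (hI : M.Indep I) (hIX : I ⊆ X) :
    I.ncard ≤ mrk M X :=
  le_csSup (mrk_bddAbove hE X) ⟨I, ⟨hI, hIX⟩, rfl⟩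

lemma mrk_le (n : ℕ) (h : ∀ J, M.Indep J → J ⊆ X → J.ncard ≤ n) : mrk M X ≤ n := by
  refine csSup_le ⟨0, ⟨∅, ⟨M.empty_indep, empty_subset X⟩, ncard_empty α⟩⟩ ?_
  rintro m ⟨J, ⟨hJ, hJX⟩, rfl⟩
  exact h J hJ hJX

lemma mrk_eq_of_basis' (hE : M.E.Finite) (hI : M.IsBasis' I X) : mrk M X = I.ncard := by
  refine le_antisymm (mrk_le _ fun J hJ hJX => ?_) (ncard_le_mrk hE hI.indep hI.subset)
  by_contra hlt
  push_neg at hlt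
  have hIfin : I.Finite := hE.subset hI.indep.subset_ground
  have hJfin : J.Finite := hE.subset hJ.subset_ground
  have henc : I.encard < J.encard := by
    rw [← hIfin.cast_ncard_eq, ← hJfin.cast_ncard_eq]
    exact_mod_cast hlt
  obtain ⟨e, he, hins⟩ := hI.indep.augment hJ henc
  exact hI.insert_not_indep ⟨hJX he.1, he.2⟩ hins

lemma mrk_mono (hE : M.E.Finite) (h : X ⊆ Y) : mrk M X ≤ mrk M Y :=
  mrk_le _ fun J hJ hJX => ncard_le_mrk hE hJ (hJX.trans h)

lemma mrk_indep_eq (hE : M.E.Finite) (hI : M.Indep I) : mrk M I = I.ncard :=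
  mrk_eq_of_basis' hE hI.isBasis_self.isBasis'

lemma mrk_le_ncard (hX : X.Finite) : mrk M X ≤ X.ncard :=
  mrk_le _ fun J _ hJX => ncard_le_ncard hJX hX

lemma mrk_le_add (hE : M.E.Finite) (hY : Y.Finite) (hXY : X ⊆ Y) :
    mrk M Y ≤ mrk M X + (Y \ X).ncard := by
  obtain ⟨L, hL⟩ := M.exists_isBasis' Y
  rw [mrk_eq_of_basis' hE hL]
  have hLfin : L.Finite := hE.subset hL.indep.subset_ground
  have h1 : L.ncard = (L ∩ X).ncard + (L \ X).ncard := by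
    rw [← ncard_union_eq (disjoint_of_subset_left inter_subset_right disjoint_sdiff_right)
      (hLfin.subset inter_subset_left) (hLfin.subset diff_subset), inter_union_diff]
  have h2 : (L ∩ X).ncard ≤ mrk M X :=
    ncard_le_mrk hE (hL.indep.subset inter_subset_left) inter_subset_right
  have h3 : (L \ X).ncard ≤ (Y \ X).ncard :=
    ncard_le_ncard (diff_subset_diff_left hL.subset) hY.diff
  omega

lemma exists_insert_mrk (hE : M.E.Finite) (X Y : Set α)
    (hlt : mrk M X < mrk M (X ∪ Y)) :
    ∃ e ∈ Y, e ∉ X ∧ mrk M X + 1 ≤ mrk M (insert e X) := by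
  obtain ⟨K, hK⟩ := M.exists_isBasis' X
  obtain ⟨L, hL, hKL⟩ := hK.indep.subset_isBasis'_of_subset (X := X ∪ Y) (hK.subset.trans subset_union_left)
  have hnsub : ¬ L ⊆ X := by
    intro hsub
    have := ncard_le_mrk hE hL.indep hsub
    rw [← mrk_eq_of_basis' hE hL] at this
    omega
  obtain ⟨e, heL, heX⟩ := not_subset.1 hnsub
  have heY : e ∈ Y := (hL.subset heL).resolve_left heX
  refine ⟨e, heY, heX, ?_⟩
  have hins : M.Indep (insert e K) := hL.indep.subset (insert_subset heL hKL)
  have hcard : (insert e K).ncard = K.ncard + 1 :=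
    ncard_insert_of_notMem (fun h => heX (hK.subset h))
      (hE.subset hK.indep.subset_ground)
  have hle : (insert e K).ncard ≤ mrk M (insert e X) :=
    ncard_le_mrk hE hins (insert_subset_insert hK.subset)
  rw [mrk_eq_of_basis' hE hK]
  omega

end aux

/-- **Proposition 1.** For matroids `M`, `N` with finite disjoint ground sets `S`, `T`,
the collection `{A ⊆ S ∪ T : A ∩ S is independent in M and λ_M(A ∩ S) ≥ ν_N(A ∩ T)}`
is the family of independent sets of a matroid (the free product `M □ N`) on `S ∪ T`. -/
theorem stmt_0 {α : Type*} (M N : Matroid α) (S T : Set α)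
    (hS : S.Finite) (hT : T.Finite) (hMS : M.E = S) (hNT : N.E = T)
    (hST : Disjoint S T) :
    ∃ L : Matroid α, L.E = S ∪ T ∧ ∀ A : Set α,
      L.Indep A ↔ A ⊆ S ∪ T ∧ M.Indep (A ∩ S) ∧
        (A ∩ T).ncard - mrk N (A ∩ T) ≤ mrk M S - mrk M (A ∩ S) := by
  have hME : M.E.Finite := hMS ▸ hS
  have hNE : N.E.Finite := hNT ▸ hT
  -- decomposition of cardinality
  have hdec : ∀ A : Set α, A ⊆ S ∪ T → A.ncard = (A ∩ S).ncard + (A ∩ T).ncard := by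
    intro A hA
    have hAfin : A.Finite := (hS.union hT).subset hA
    have hu : A ∩ S ∪ A ∩ T = A := by
      rw [← inter_union_distrib_left, inter_eq_left.2 hA]
    conv_lhs => rw [← hu]
    rw [ncard_union_eq
      (disjoint_of_subset inter_subset_right inter_subset_right hST)
      (hAfin.subset inter_subset_left) (hAfin.subset inter_subset_left)]
  -- the independence predicate, reformulated
  set Ind : Set α → Prop := fun A =>
    A ⊆ S ∪ T ∧ M.Indep (A ∩ S) ∧ A.ncard ≤ mrk M S + mrk N (A ∩ T) with hInd
  have key : ∀ A : Set α, A ⊆ S ∪ T → M.Indep (A ∩ S) →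
      (((A ∩ T).ncard - mrk N (A ∩ T) ≤ mrk M S - mrk M (A ∩ S)) ↔
        A.ncard ≤ mrk M S + mrk N (A ∩ T)) := by
    intro A hA hind
    have h1 : mrk M (A ∩ S) = (A ∩ S).ncard := mrk_indep_eq hME hind
    have h2 : (A ∩ S).ncard ≤ mrk M S := ncard_le_mrk hME hind inter_subset_right
    have h3 : mrk N (A ∩ T) ≤ (A ∩ T).ncard := mrk_le_ncard (hT.inter_of_right A)
    have h4 := hdec A hA
    omega
  -- build the matroid
  refine ⟨(IndepMatroid.ofFinite (hS.union hT) Ind ?_ ?_ ?_ ?_).matroid, ?_, ?_⟩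
  · -- empty
    refine ⟨empty_subset _, by simpa using M.empty_indep, ?_⟩
    simp
  · -- subset closed
    rintro I J ⟨hJst, hJS, hJc⟩ hIJ
    refine ⟨hIJ.trans hJst, hJS.subset (inter_subset_inter_left S hIJ), ?_⟩
    have hJfin : J.Finite := (hS.union hT).subset hJst
    have hd1 : I.ncard + (J \ I).ncard = J.ncard := by
      rw [← ncard_union_eq disjoint_sdiff_right (hJfin.subset hIJ) hJfin.diff,
        union_diff_cancel hIJ]
    have hd2 : mrk N (J ∩ T) ≤ mrk N (I ∩ T) + ((J ∩ T) \ (I ∩ T)).ncard :=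
      mrk_le_add hNE (hJfin.subset inter_subset_left)
        (inter_subset_inter_left T hIJ)
    have hd3 : ((J ∩ T) \ (I ∩ T)).ncard ≤ (J \ I).ncard := by
      refine ncard_le_ncard (fun x hx => ⟨hx.1.1, fun hxI => hx.2 ⟨hxI, hx.1.2⟩⟩)
        hJfin.diff
    omega
  · -- augmentation
    rintro I J ⟨hIst, hIS, hIc⟩ ⟨hJst, hJS, hJc⟩ hIJ
    have hIfin : I.Finite := (hS.union hT).subset hIst
    have hJfin : J.Finite := (hS.union hT).subset hJst
    have hdI := hdec I hIst
    have hdJ := hdec J hJst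
    by_cases h1 : mrk N (I ∩ T) < mrk N ((I ∩ T) ∪ (J ∩ T))
    · obtain ⟨e, heJT, heIT, hrk⟩ := exists_insert_mrk hNE (I ∩ T) (J ∩ T) h1
      have heT : e ∈ T := heJT.2
      have heI : e ∉ I := fun h => heIT ⟨h, heT⟩
      have heS : e ∉ S := fun h => hST.ne_of_mem h heT rfl
      refine ⟨e, heJT.1, heI, insert_subset (Or.inr heT) hIst, ?_, ?_⟩
      · rwa [insert_inter_of_notMem heS]
      · rw [insert_inter_of_mem heT,
          ncard_insert_of_notMem heI hIfin]
        have := mrk_mono hNE (subset_union_left (s := I ∩ T) (t := J ∩ T))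
        omega
    · push_neg at h1
      have hslack : I.ncard < mrk M S + mrk N (I ∩ T) := by
        have hm : mrk N (J ∩ T) ≤ mrk N ((I ∩ T) ∪ (J ∩ T)) :=
          mrk_mono hNE subset_union_right
        omega
      by_cases ha : (I ∩ S).ncard < (J ∩ S).ncard
      · have henc : (I ∩ S).encard < (J ∩ S).encard := by
          rw [← (hIfin.subset inter_subset_left).cast_ncard_eq,
            ← (hJfin.subset inter_subset_left).cast_ncard_eq]
          exact_mod_cast ha
        obtain ⟨e, he, hins⟩ := hIS.augment hJS henc
        have heS : e ∈ S := he.1.2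
        have heT : e ∉ T := fun h => hST.ne_of_mem heS h rfl
        have heI : e ∉ I := fun h => he.2 ⟨h, heS⟩
        refine ⟨e, he.1.1, heI, insert_subset (Or.inl heS) hIst, ?_, ?_⟩
        · rw [insert_inter_of_mem heS]; exact hins
        · rw [insert_inter_of_notMem heT, ncard_insert_of_notMem heI hIfin]
          omega
      · have hb : (I ∩ T).ncard < (J ∩ T).ncard := by omega
        obtain ⟨e, heJT, heIT⟩ :=
          exists_mem_notMem_of_ncard_lt_ncard hb (hIfin.subset inter_subset_left)
        have heT : e ∈ T := heJT.2
        have heI : e ∉ I := fun h => heIT ⟨h, heT⟩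
        have heS : e ∉ S := fun h => hST.ne_of_mem h heT rfl
        refine ⟨e, heJT.1, heI, insert_subset (Or.inr heT) hIst, ?_, ?_⟩
        · rwa [insert_inter_of_notMem heS]
        · rw [insert_inter_of_mem heT, ncard_insert_of_notMem heI hIfin]
          have := mrk_mono hNE (subset_insert e (I ∩ T))
          omega
  · exact fun I hI => hI.1
  · simp
  · intro A
    simp only [IndepMatroid.matroid_indep_iff, IndepMatroid.ofFinite_indep, hInd]
    constructor
    · rintro ⟨h1, h2, h3⟩
      exact ⟨h1, h2, (key A h1 h2).2 h3⟩
    · rintro ⟨h1, h2, h3⟩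
      exact ⟨h1, h2, (key A h1 h2).1 h3⟩
end

section
/- Let M and N be matroids with finite disjoint ground sets S and T, and let L be the free product M □ N. Then the contraction of L by S equals N: L/S = N. -/
open Set Matroid

/-- The contraction `L / C`, defined as the dual of the deletion of `C` from the dual:
`L / C = (L✶ \ C)✶`. -/
noncomputable def mcontract {α : Type*} (L : Matroid α) (C : Set α) : Matroid α :=
  (L✶ ↾ (L.E \ C))✶

lemma mrk_le_of_indep {α : Type*} {M : Matroid α} {I X : Set α} (hX : X.Finite)
    (hI : M.Indep I) (hIX : I ⊆ X) : I.ncard ≤ mrk M X := by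
  apply le_csSup
  · refine ⟨X.ncard, ?_⟩
    rintro n ⟨J, ⟨hJ, hJX⟩, rfl⟩
    exact Set.ncard_le_ncard hJX hX
  · exact ⟨I, ⟨hI, hIX⟩, rfl⟩

lemma mrk_eq_of_basis {α : Type*} {M : Matroid α} {I X : Set α} (hX : X.Finite)
    (hI : M.IsBasis I X) : mrk M X = I.ncard := by
  refine le_antisymm (csSup_le ⟨0, ∅, ⟨M.empty_indep, empty_subset X⟩, by simp⟩ ?_)
    (mrk_le_of_indep hX hI.indep hI.subset)
  rintro n ⟨J, ⟨hJ, hJX⟩, rfl⟩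
  obtain ⟨I', hI', hJI'⟩ := hJ.subset_isBasis_of_subset hJX hI.subset_ground
  calc J.ncard ≤ I'.ncard := Set.ncard_le_ncard hJI' (hX.subset hI'.subset)
    _ = I.ncard := by rw [Set.ncard, Set.ncard, hI'.encard_eq_encard hI]

lemma indep_of_ncard_le_mrk {α : Type*} {M : Matroid α} {X : Set α} (hX : X.Finite)
    (hXE : X ⊆ M.E) (h : X.ncard ≤ mrk M X) : M.Indep X := by
  obtain ⟨I, hI⟩ := M.exists_isBasis X hXE
  rw [mrk_eq_of_basis hX hI] at h
  rw [Set.eq_of_subset_of_ncard_le hI.subset h hX] at hI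
  exact hI.indep

/-- The contraction of the free product `L = M □ N` by `S` equals `N`. -/
theorem stmt_4 {α : Type*} (M N : Matroid α) (S T : Set α)
    (hS : S.Finite) (hT : T.Finite) (hMS : M.E = S) (hNT : N.E = T)
    (hST : Disjoint S T)
    (L : Matroid α) (hLE : L.E = S ∪ T)
    (hLI : ∀ A : Set α, L.Indep A ↔ A ⊆ S ∪ T ∧ M.Indep (A ∩ S) ∧
      (A ∩ T).ncard - mrk N (A ∩ T) ≤ mrk M S - mrk M (A ∩ S)) :
    mcontract L S = N := by
  have hLS : L.E \ S = T := by
    rw [hLE]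
    ext x
    simp only [mem_diff, mem_union]
    exact ⟨fun ⟨h1, h2⟩ => h1.resolve_left h2,
      fun h => ⟨Or.inr h, fun hx => hST.ne_of_mem hx h rfl⟩⟩
  -- key1 : every base of L contains a base of N
  have key1 : ∀ B, L.IsBase B → ∃ B', N.IsBase B' ∧ B' ⊆ B := by
    intro B hB
    have hBST : B ⊆ S ∪ T := hLE ▸ hB.subset_ground
    have hBT : B ∩ T ⊆ N.E := hNT ▸ inter_subset_right
    have hBTfin : (B ∩ T).Finite := hT.subset inter_subset_right
    obtain ⟨I, hI⟩ := N.exists_isBasis (B ∩ T) hBT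
    have hIfin : I.Finite := hBTfin.subset hI.subset
    refine ⟨I, ?_, hI.subset.trans inter_subset_left⟩
    by_contra hInb
    obtain ⟨B₀, hB₀⟩ := N.exists_isBase
    obtain ⟨t, ht, hins⟩ := hI.indep.exists_insert_of_not_isBase hInb hB₀
    have htT : t ∈ T := hNT ▸ hB₀.subset_ground ht.1
    have htB : t ∉ B := by
      intro htB
      have : t ∈ I := by
        have := hI.eq_of_subset_indep hins (subset_insert _ _)
          (insert_subset ⟨htB, htT⟩ hI.subset)
        rw [this]; exact mem_insert _ _
      exact ht.2 this
    -- insert t B is independent in L, contradicting maximality of B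
    have hBi := (hLI B).mp hB.indep
    have htS : t ∉ S := fun hx => hST.ne_of_mem hx htT rfl
    have hiS : insert t B ∩ S = B ∩ S := by
      ext x
      simp only [mem_inter_iff, mem_insert_iff]
      constructor
      · rintro ⟨(rfl | hx), hxS⟩
        · exact absurd hxS htS
        · exact ⟨hx, hxS⟩
      · rintro ⟨hx, hxS⟩; exact ⟨Or.inr hx, hxS⟩
    have hiT : insert t B ∩ T = insert t (B ∩ T) := by
      ext x
      simp only [mem_inter_iff, mem_insert_iff]
      constructor
      · rintro ⟨(rfl | hx), hxT⟩
        · exact Or.inl rfl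
        · exact Or.inr ⟨hx, hxT⟩
      · rintro (rfl | ⟨hx, hxT⟩)
        · exact ⟨Or.inl rfl, htT⟩
        · exact ⟨Or.inr hx, hxT⟩
    have htBT : t ∉ B ∩ T := fun h => htB h.1
    have hmrk : mrk N (B ∩ T) = I.ncard := mrk_eq_of_basis hBTfin hI
    have hmrk2 : I.ncard + 1 ≤ mrk N (insert t (B ∩ T)) := by
      have hle := mrk_le_of_indep (hBTfin.insert t) hins
        (insert_subset_insert hI.subset)
      rwa [Set.ncard_insert_of_notMem ht.2 hIfin] at hle
    have hncard : (insert t (B ∩ T)).ncard = (B ∩ T).ncard + 1 :=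
      Set.ncard_insert_of_notMem htBT hBTfin
    have hind : L.Indep (insert t B) := by
      rw [hLI]
      refine ⟨insert_subset (Or.inr htT) hBST, by rw [hiS]; exact hBi.2.1, ?_⟩
      rw [hiS, hiT, hncard]
      have h3 := hBi.2.2
      omega
    have : B = insert t B := hB.eq_of_subset_indep hind (subset_insert _ _)
    exact htB (this ▸ mem_insert t B)
  -- key2 : given a base B' of N, Bm ∪ B' is a base of L for any base Bm of M
  have key2 : ∀ B', N.IsBase B' → ∀ Bm, M.IsBase Bm → L.IsBase (Bm ∪ B') := by
    intro B' hB' Bm hBm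
    have hBmS : Bm ⊆ S := hMS ▸ hBm.subset_ground
    have hB'T : B' ⊆ T := hNT ▸ hB'.subset_ground
    have hB'fin : B'.Finite := hT.subset hB'T
    have hBS : (Bm ∪ B') ∩ S = Bm := by
      rw [union_inter_distrib_right, inter_eq_left.mpr hBmS,
        ((hST.symm.mono_left hB'T).inter_eq : B' ∩ S = ∅), union_empty]
    have hBT : (Bm ∪ B') ∩ T = B' := by
      rw [union_inter_distrib_right, inter_eq_left.mpr hB'T,
        ((hST.mono_left hBmS).inter_eq : Bm ∩ T = ∅), empty_union]
    have hrkS : mrk M S = Bm.ncard :=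
      mrk_eq_of_basis hS (hMS ▸ hBm.isBasis_ground)
    have hind : L.Indep (Bm ∪ B') := by
      rw [hLI]
      refine ⟨union_subset (hBmS.trans subset_union_left)
        (hB'T.trans subset_union_right), by rw [hBS]; exact hBm.indep, ?_⟩
      rw [hBS, hBT, mrk_eq_of_basis hB'fin hB'.indep.isBasis_self]
      omega
    rw [isBase_iff_maximal_indep]
    refine ⟨hind, fun A hA hBA => ?_⟩
    obtain ⟨hA1, hA2, hA3⟩ := (hLI A).mp hA
    have hBmA : Bm ⊆ A ∩ S := subset_inter ((subset_union_left).trans hBA) hBmS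
    have hAS : A ∩ S = Bm := (hBm.eq_of_subset_indep hA2 hBmA).symm
    have hASfin : (A ∩ T).Finite := hT.subset inter_subset_right
    have hmrkAS : mrk M (A ∩ S) = Bm.ncard := by
      rw [hAS]; exact mrk_eq_of_basis (hS.subset hBmS) hBm.indep.isBasis_self
    have hATind : N.Indep (A ∩ T) := by
      refine indep_of_ncard_le_mrk hASfin (hNT ▸ inter_subset_right) ?_
      omega
    have hAT : A ∩ T = B' :=
      (hB'.eq_of_subset_indep hATind
        (subset_inter ((subset_union_right).trans hBA) hB'T)).symm
    have hAeq : A = Bm ∪ B' := by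
      calc A = A ∩ (S ∪ T) := (inter_eq_left.mpr hA1).symm
        _ = (A ∩ S) ∪ (A ∩ T) := inter_union_distrib_left A S T
        _ = Bm ∪ B' := by rw [hAS, hAT]
    exact hAeq.le
  -- now prove the theorem via dual
  suffices h : L✶ ↾ T = N✶ by
    rw [mcontract, hLS, h, dual_dual]
  refine ext_indep (by rw [restrict_ground_eq, dual_ground, hNT]) ?_
  intro J hJ
  rw [restrict_ground_eq] at hJ
  rw [restrict_indep_iff, dual_indep_iff_exists', dual_indep_iff_exists']
  constructor
  · rintro ⟨⟨-, B, hB, hJB⟩, -⟩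
    obtain ⟨B', hB', hB'B⟩ := key1 B hB
    exact ⟨hNT ▸ hJ, B', hB', hJB.mono_right hB'B⟩
  · rintro ⟨-, B', hB', hJB'⟩
    obtain ⟨Bm, hBm⟩ := M.exists_isBase
    refine ⟨⟨hLE ▸ hJ.trans subset_union_right, Bm ∪ B', key2 B' hB' Bm hBm, ?_⟩, hJ⟩
    exact disjoint_union_right.mpr
      ⟨(hST.symm.mono_left hJ).mono_right (hMS ▸ hBm.subset_ground), hJB'⟩
end

section
/- Let M and N be matroids with finite disjoint ground sets S and T, and let L be the free product M □ N. Then for every subset U ⊆ S ∪ T with |U| = |S|, the rank of U in L satisfies rk_L(U) ≥ rk(M). -/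
open Set Matroid

lemma mrk_bdd {α : Type*} {M : Matroid α} (hE : M.E.Finite) (X : Set α) :
    BddAbove (Set.ncard '' {I | M.Indep I ∧ I ⊆ X}) := by
  refine ⟨M.E.ncard, ?_⟩
  rintro n ⟨I, ⟨hI, -⟩, rfl⟩
  exact Set.ncard_le_ncard hI.subset_ground hE

lemma le_mrk {α : Type*} {M : Matroid α} (hE : M.E.Finite) {I X : Set α}
    (hI : M.Indep I) (hIX : I ⊆ X) : I.ncard ≤ mrk M X :=
  le_csSup (mrk_bdd hE X) ⟨I, ⟨hI, hIX⟩, rfl⟩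

lemma exists_mrk {α : Type*} {M : Matroid α} (hE : M.E.Finite) (X : Set α) :
    ∃ I, M.Indep I ∧ I ⊆ X ∧ I.ncard = mrk M X := by
  have h := Nat.sSup_mem (s := Set.ncard '' {I | M.Indep I ∧ I ⊆ X})
    ⟨0, ∅, ⟨M.empty_indep, empty_subset X⟩, by simp⟩ (mrk_bdd hE X)
  obtain ⟨I, ⟨hI, hIX⟩, hcard⟩ := h
  exact ⟨I, hI, hIX, hcard⟩

lemma mrk_indep {α : Type*} {M : Matroid α} (hE : M.E.Finite) {I : Set α}
    (hI : M.Indep I) : mrk M I = I.ncard := by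
  apply le_antisymm
  · refine csSup_le ⟨(∅ : Set α).ncard, ∅, ⟨M.empty_indep, empty_subset I⟩, rfl⟩ ?_
    rintro n ⟨J, ⟨-, hJI⟩, rfl⟩
    exact Set.ncard_le_ncard hJI (hE.subset hI.subset_ground)
  · exact le_mrk hE hI subset_rfl

/-- **Lemma 4.** If `L = M □ N`, then `rk(M) ≤ rk_L(U)` for every `U ⊆ S ∪ T`
with `|U| = |S|`. -/
theorem stmt_6 {α : Type*} (M N : Matroid α) (S T : Set α)
    (hS : S.Finite) (hT : T.Finite) (hMS : M.E = S) (hNT : N.E = T)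
    (hST : Disjoint S T)
    (L : Matroid α) (hLE : L.E = S ∪ T)
    (hLI : ∀ A : Set α, L.Indep A ↔ A ⊆ S ∪ T ∧ M.Indep (A ∩ S) ∧
      (A ∩ T).ncard - mrk N (A ∩ T) ≤ mrk M S - mrk M (A ∩ S)) :
    ∀ U : Set α, U ⊆ S ∪ T → U.ncard = S.ncard → mrk M S ≤ mrk L U := by
  intro U hU hcard
  have hEM : M.E.Finite := hMS ▸ hS
  have hEL : L.E.Finite := by rw [hLE]; exact hS.union hT
  set r := mrk M S with hr
  -- a maximal independent subset of U ∩ S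
  obtain ⟨I, hI, hIUS, hIcard⟩ := exists_mrk hEM (U ∩ S)
  set i := mrk M (U ∩ S) with hi
  have hIS : I ⊆ S := hIUS.trans inter_subset_right
  have hIfin : I.Finite := hS.subset hIS
  have hi_le_r : i ≤ r := hIcard ▸ le_mrk hEM hI hIS
  -- cardinality bookkeeping
  have hUSfin : (U ∩ S).Finite := hS.subset inter_subset_right
  have hUTfin : (U ∩ T).Finite := hT.subset inter_subset_right
  have hUsplit : (U ∩ S).ncard + (U ∩ T).ncard = S.ncard := by
    rw [← Set.ncard_union_eq (hST.mono inter_subset_right inter_subset_right)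
      hUSfin hUTfin, ← Set.inter_union_distrib_left, inter_eq_left.mpr hU, hcard]
  -- r ≤ i + |U ∩ T|
  obtain ⟨K, hK, hKS, hKcard⟩ := exists_mrk hEM S
  have hKfin : K.Finite := hS.subset hKS
  have hK1 : (K ∩ (U ∩ S)).ncard ≤ i :=
    le_mrk hEM (hK.subset inter_subset_left) inter_subset_right
  have hK2 : (K \ (U ∩ S)).ncard ≤ (S \ (U ∩ S)).ncard :=
    Set.ncard_le_ncard (diff_subset_diff_left hKS) hS.diff
  have hK3 : (K ∩ (U ∩ S)).ncard + (K \ (U ∩ S)).ncard = K.ncard :=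
    Set.ncard_inter_add_ncard_diff_eq_ncard K (U ∩ S) hKfin
  have hSdiff : (S \ (U ∩ S)).ncard = S.ncard - (U ∩ S).ncard :=
    Set.ncard_diff inter_subset_right hUSfin
  have hUScard_le : (U ∩ S).ncard ≤ S.ncard := by omega
  have hr_le : r ≤ i + (U ∩ T).ncard := by omega
  -- choose J ⊆ U ∩ T of size r - i
  obtain ⟨J, hJUT, hJcard⟩ := (by
    obtain ⟨J, hJ, hJe⟩ := Set.exists_subset_encard_eq (s := U ∩ T) (k := ((r - i : ℕ) : ℕ∞))
      (by rw [← hUTfin.cast_ncard_eq]; exact_mod_cast (by omega : r - i ≤ (U ∩ T).ncard))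
    exact ⟨J, hJ, by rw [Set.ncard_def, hJe, ENat.toNat_coe]⟩ : ∃ J, J ⊆ U ∩ T ∧ J.ncard = r - i)
  have hJT : J ⊆ T := hJUT.trans inter_subset_right
  have hJfin : J.Finite := hT.subset hJT
  -- A = I ∪ J is independent in L
  set A := I ∪ J with hA
  have hAS : A ∩ S = I := by
    rw [hA, union_inter_distrib_right, inter_eq_left.mpr hIS,
      (hST.symm.mono_left hJT).inter_eq, union_empty]
  have hAT : A ∩ T = J := by
    rw [hA, union_inter_distrib_right, inter_eq_left.mpr hJT,
      (hST.mono_left hIS).inter_eq, empty_union]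
  have hAindep : L.Indep A := by
    rw [hLI]
    refine ⟨union_subset (hIS.trans subset_union_left) (hJT.trans subset_union_right),
      by rwa [hAS], ?_⟩
    rw [hAS, hAT, mrk_indep hEM hI, hIcard, hJcard]
    omega
  have hAU : A ⊆ U :=
    union_subset (hIUS.trans inter_subset_left) (hJUT.trans inter_subset_left)
  have hAcard : A.ncard = r := by
    rw [hA, Set.ncard_union_eq (hST.mono hIS hJT) hIfin hJfin, hIcard, hJcard]
    omega
  calc r = A.ncard := hAcard.symm
    _ ≤ mrk L U := le_mrk hEL hAindep hAU
end
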